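/- Let (u, v, pu, pv) solve the FLRW null geodesic system on [s₀,S) with angular momentum L ≥ 0, with the mass shell relation 4t²r²·pu·pv = L² holding on [s₀,S), and with pv(s₀) > 0 and 0 ≤ pu(s₀) ≤ (1/2)·pv(s₀). Then for all s ∈ [s₀,S): (i) t(s₀)·pv(s₀) ≤ t(s)·pv(s) ≤ 2·t(s₀)·pv(s₀); (ii) 0 ≤ pu(s) ≤ 2·t(s₀)·r(s₀)²·pv(s₀)/(t(s)·r(s)²); (iii) t(s)·(pv(s) − pu(s)) ≥ t(s₀)·(pv(s₀) − pu(s₀)) ≥ (1/2)·t(s₀)·pv(s₀), and r is strictly increasing on [s₀,S); (iv) u is nondecreasing on [s₀,S) and u(s₀) ≤ u(s) ≤ u(s₀) + 4·r(s₀). -/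

import Mathlib

/-- The time coordinate `t = (v+u)²/4` along a curve in double null coordinates. -/
noncomputable def tOf (u v : ℝ → ℝ) (s : ℝ) : ℝ := (v s + u s) ^ 2 / 4

/-- The radial coordinate `r = v − u` along a curve in double null coordinates. -/
noncomputable def rOf (u v : ℝ → ℝ) (s : ℝ) : ℝ := v s - u s

/-- **The FLRW null geodesic system** with angular momentum `L` on a set `I ⊆ ℝ`:
`u' = pu`, `v' = pv`,
`pu' = −t^{−1/2}·pu² − (1/2)(1/(2t^{1/2}) + 1/r)·L²/(t²r²)`,
`pv' = −t^{−1/2}·pv² − (1/2)(1/(2t^{1/2}) − 1/r)·L²/(t²r²)`,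
where `t = (v+u)²/4` and `r = v−u` are required to satisfy `v+u > 0`, `r > 0` on `I`,
and `pu ≥ 0`, `pv ≥ 0` on `I`. -/
def FLRWGeodesicSystem (I : Set ℝ) (L : ℝ) (u v pu pv : ℝ → ℝ) : Prop :=
  (∀ s ∈ I, 0 < v s + u s) ∧
  (∀ s ∈ I, 0 < rOf u v s) ∧
  (∀ s ∈ I, 0 ≤ pu s) ∧
  (∀ s ∈ I, 0 ≤ pv s) ∧
  (∀ s ∈ I, HasDerivAt u (pu s) s) ∧
  (∀ s ∈ I, HasDerivAt v (pv s) s) ∧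
  (∀ s ∈ I, HasDerivAt pu
    (-(pu s) ^ 2 / Real.sqrt (tOf u v s)
      - 1 / 2 * (1 / (2 * Real.sqrt (tOf u v s)) + 1 / rOf u v s) * L ^ 2
          / ((tOf u v s) ^ 2 * (rOf u v s) ^ 2)) s) ∧
  (∀ s ∈ I, HasDerivAt pv
    (-(pv s) ^ 2 / Real.sqrt (tOf u v s)
      - 1 / 2 * (1 / (2 * Real.sqrt (tOf u v s)) - 1 / rOf u v s) * L ^ 2
          / ((tOf u v s) ^ 2 * (rOf u v s) ^ 2)) s)

open Set

lemma aux_mono {a b : ℝ} {f f' : ℝ → ℝ}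
    (hf : ∀ s ∈ Ico a b, HasDerivAt f (f' s) s)
    (h0 : ∀ s ∈ Ico a b, 0 ≤ f' s) : MonotoneOn f (Ico a b) := by
  apply monotoneOn_of_deriv_nonneg (convex_Ico a b)
  · exact fun s hs => (hf s hs).continuousAt.continuousWithinAt
  · intro s hs
    rw [interior_Ico] at hs
    exact ((hf s (Ioo_subset_Ico_self hs)).differentiableAt).differentiableWithinAt
  · intro s hs
    rw [interior_Ico] at hs
    rw [(hf s (Ioo_subset_Ico_self hs)).deriv]
    exact h0 s (Ioo_subset_Ico_self hs)

lemma aux_smono {a b : ℝ} {f f' : ℝ → ℝ}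
    (hf : ∀ s ∈ Ico a b, HasDerivAt f (f' s) s)
    (h0 : ∀ s ∈ Ico a b, 0 < f' s) : StrictMonoOn f (Ico a b) := by
  apply strictMonoOn_of_deriv_pos (convex_Ico a b)
  · exact fun s hs => (hf s hs).continuousAt.continuousWithinAt
  · intro s hs
    rw [interior_Ico] at hs
    rw [(hf s (Ioo_subset_Ico_self hs)).deriv]
    exact h0 s (Ioo_subset_Ico_self hs)


/-- **Quantitative late-time estimates along FLRW null geodesics.**
Let `(u,v,pu,pv)` solve the FLRW null geodesic system on `[s₀,S)` with angular momentum
`L ≥ 0`, with the mass shell relation on `[s₀,S)`, `pv(s₀) > 0` and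
`0 ≤ pu(s₀) ≤ (1/2)pv(s₀)`.  Then for all `s ∈ [s₀,S)`:
(i) `t(s₀)pv(s₀) ≤ t(s)pv(s) ≤ 2t(s₀)pv(s₀)`;
(ii) `0 ≤ pu(s) ≤ 2t(s₀)r(s₀)²pv(s₀)/(t(s)r(s)²)`;
(iii) `t(s)(pv(s)−pu(s)) ≥ t(s₀)(pv(s₀)−pu(s₀)) ≥ (1/2)t(s₀)pv(s₀)` and `r` is strictly
increasing on `[s₀,S)`;
(iv) `u` is nondecreasing on `[s₀,S)` and `u(s₀) ≤ u(s) ≤ u(s₀) + 4r(s₀)`. -/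
theorem flrw_geodesic_late_time_estimates (s₀ S L : ℝ) (hs₀S : s₀ < S) (hL : 0 ≤ L)
    (u v pu pv : ℝ → ℝ)
    (hsys : FLRWGeodesicSystem (Ico s₀ S) L u v pu pv)
    (hms : ∀ s ∈ Ico s₀ S,
      4 * (tOf u v s) ^ 2 * (rOf u v s) ^ 2 * pu s * pv s = L ^ 2)
    (hpv₀ : 0 < pv s₀) (hpu₀ : pu s₀ ≤ 1 / 2 * pv s₀) :
    (∀ s ∈ Ico s₀ S,
      tOf u v s₀ * pv s₀ ≤ tOf u v s * pv s ∧
      tOf u v s * pv s ≤ 2 * (tOf u v s₀ * pv s₀)) ∧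
    (∀ s ∈ Ico s₀ S,
      0 ≤ pu s ∧
      pu s ≤ 2 * tOf u v s₀ * (rOf u v s₀) ^ 2 * pv s₀ / (tOf u v s * (rOf u v s) ^ 2)) ∧
    ((∀ s ∈ Ico s₀ S,
        tOf u v s₀ * (pv s₀ - pu s₀) ≤ tOf u v s * (pv s - pu s)) ∧
      1 / 2 * (tOf u v s₀ * pv s₀) ≤ tOf u v s₀ * (pv s₀ - pu s₀) ∧
      StrictMonoOn (rOf u v) (Ico s₀ S)) ∧
    (MonotoneOn u (Ico s₀ S) ∧
      ∀ s ∈ Ico s₀ S, u s₀ ≤ u s ∧ u s ≤ u s₀ + 4 * rOf u v s₀) := by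
  obtain ⟨hvu, hr, hpu, hpv, hu', hv', hpu', hpv'⟩ := hsys
  have hs0 : s₀ ∈ Ico s₀ S := ⟨le_refl _, hs₀S⟩
  have ht : ∀ s ∈ Ico s₀ S, 0 < tOf u v s := fun s hs => by
    have := hvu s hs; unfold tOf; positivity
  have hsq : ∀ s ∈ Ico s₀ S, Real.sqrt (tOf u v s) = (v s + u s) / 2 := fun s hs => by
    unfold tOf
    rw [show (v s + u s) ^ 2 / 4 = ((v s + u s) / 2) ^ 2 by ring,
      Real.sqrt_sq (by linarith [hvu s hs])]
  have hr' : ∀ s ∈ Ico s₀ S, HasDerivAt (rOf u v) (pv s - pu s) s := fun s hs =>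
    (hv' s hs).sub (hu' s hs)
  have ht' : ∀ s ∈ Ico s₀ S,
      HasDerivAt (tOf u v) (Real.sqrt (tOf u v s) * (pu s + pv s)) s := fun s hs => by
    have h := (((hv' s hs).add (hu' s hs)).pow 2).div_const 4
    have h2 : HasDerivAt (fun s => (v s + u s) ^ 2 / 4)
        (Real.sqrt (tOf u v s) * (pu s + pv s)) s := by
      refine h.congr_deriv ?_
      simp only [Pi.add_apply]
      rw [hsq s hs]; push_cast; ring
    exact h2
  -- derivative of t * pv
  have hA : ∀ s ∈ Ico s₀ S, HasDerivAt (fun s => tOf u v s * pv s)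
      (2 * tOf u v s * pu s * pv s / rOf u v s) s := fun s hs => by
    have h := (ht' s hs).mul (hpv' s hs)
    refine h.congr_deriv ?_
    rw [← hms s hs]
    have hq : 0 < Real.sqrt (tOf u v s) := Real.sqrt_pos.mpr (ht s hs)
    have hq2 : Real.sqrt (tOf u v s) ^ 2 = tOf u v s := Real.sq_sqrt (ht s hs).le
    set q := Real.sqrt (tOf u v s) with hqdef
    rw [← hq2]
    have hrne := (hr s hs).ne'
    field_simp
    ring
  have hB : ∀ s ∈ Ico s₀ S, HasDerivAt (fun s => tOf u v s * pu s)
      (-(2 * tOf u v s * pu s * pv s / rOf u v s)) s := fun s hs => by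
    have h := (ht' s hs).mul (hpu' s hs)
    refine h.congr_deriv ?_
    rw [← hms s hs]
    have hq : 0 < Real.sqrt (tOf u v s) := Real.sqrt_pos.mpr (ht s hs)
    have hq2 : Real.sqrt (tOf u v s) ^ 2 = tOf u v s := Real.sq_sqrt (ht s hs).le
    set q := Real.sqrt (tOf u v s) with hqdef
    rw [← hq2]
    have hrne := (hr s hs).ne'
    field_simp
    ring
  have hC : ∀ s ∈ Ico s₀ S, HasDerivAt (fun s => tOf u v s * rOf u v s ^ 2 * pu s)
      (-(2 * tOf u v s * rOf u v s * pu s ^ 2)) s := fun s hs => by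
    have h := ((ht' s hs).mul ((hr' s hs).pow 2)).mul (hpu' s hs)
    refine h.congr_deriv ?_
    simp only [Pi.mul_apply, Pi.pow_apply]
    rw [← hms s hs]
    have hq : 0 < Real.sqrt (tOf u v s) := Real.sqrt_pos.mpr (ht s hs)
    have hq2 : Real.sqrt (tOf u v s) ^ 2 = tOf u v s := Real.sq_sqrt (ht s hs).le
    set q := Real.sqrt (tOf u v s) with hqdef
    rw [← hq2]
    have hrne := (hr s hs).ne'
    field_simp
    ring
  -- monotone quantities
  have hAmono : MonotoneOn (fun s => tOf u v s * pv s) (Ico s₀ S) := by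
    refine aux_mono hA fun s hs => ?_
    have h1 := (ht s hs).le; have h2 := hpu s hs; have h3 := hpv s hs
    have h4 := (hr s hs).le
    positivity
  have hBanti : MonotoneOn (fun s => -(tOf u v s * pu s)) (Ico s₀ S) := by
    refine aux_mono (f' := fun s => 2 * tOf u v s * pu s * pv s / rOf u v s)
      (fun s hs => (hB s hs).neg.congr_deriv (by simp)) fun s hs => ?_
    have h1 := (ht s hs).le; have h2 := hpu s hs; have h3 := hpv s hs
    have h4 := (hr s hs).le
    positivity
  have hCanti : MonotoneOn (fun s => -(tOf u v s * rOf u v s ^ 2 * pu s)) (Ico s₀ S) := by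
    refine aux_mono (f' := fun s => 2 * tOf u v s * rOf u v s * pu s ^ 2)
      (fun s hs => (hC s hs).neg.congr_deriv (by simp)) fun s hs => ?_
    have h1 := (ht s hs).le; have h2 := hpu s hs; have h4 := (hr s hs).le
    positivity
  -- conservation of t(pu+pv)
  have hEconst : ∀ s ∈ Ico s₀ S,
      tOf u v s * pv s + tOf u v s * pu s = tOf u v s₀ * pv s₀ + tOf u v s₀ * pu s₀ := by
    have hE : ∀ s ∈ Ico s₀ S, HasDerivAt (fun s => tOf u v s * pv s + tOf u v s * pu s)
        ((0 : ℝ → ℝ) s) s := fun s hs => by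
      have h := (hA s hs).add (hB s hs)
      refine h.congr_deriv ?_
      simp
    have h1 := aux_mono hE (fun s hs => le_refl 0)
    have h2 := aux_mono (f' := fun _ => (0:ℝ))
      (fun s hs => by simpa using (hE s hs).neg) (fun s hs => le_refl 0)
    intro s hs
    have := h1 hs0 hs hs.1
    have := h2 hs0 hs hs.1
    simp only [Pi.neg_apply] at *
    linarith
  -- pointwise bounds
  have hBle : ∀ s ∈ Ico s₀ S, tOf u v s * pu s ≤ tOf u v s₀ * pu s₀ := fun s hs => by
    have := hBanti hs0 hs hs.1; simp only at this; linarith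
  have hDlow : ∀ s ∈ Ico s₀ S,
      tOf u v s₀ * (pv s₀ - pu s₀) ≤ tOf u v s * (pv s - pu s) := fun s hs => by
    have h1 := hEconst s hs
    have h2 := hBle s hs
    nlinarith [h1, h2]
  have ht0 := ht s₀ hs0
  have hhalf : 1 / 2 * (tOf u v s₀ * pv s₀) ≤ tOf u v s₀ * (pv s₀ - pu s₀) := by
    nlinarith [mul_le_mul_of_nonneg_left hpu₀ ht0.le]
  have hdpos : ∀ s ∈ Ico s₀ S, 0 < pv s - pu s := fun s hs => by
    have h1 := hDlow s hs
    have h2 := ht s hs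
    nlinarith [ht0]
  have rStrict : StrictMonoOn (rOf u v) (Ico s₀ S) := aux_smono hr' hdpos
  have uMono : MonotoneOn u (Ico s₀ S) := aux_mono hu' hpu
  have hCle : ∀ s ∈ Ico s₀ S,
      tOf u v s * rOf u v s ^ 2 * pu s ≤ tOf u v s₀ * rOf u v s₀ ^ 2 * pu s₀ := fun s hs => by
    have := hCanti hs0 hs hs.1; simp only at this; linarith
  have hr0 := hr s₀ hs0
  have hφ : ∀ s ∈ Ico s₀ S, HasDerivAt (fun s => u s + rOf u v s₀ ^ 2 / rOf u v s)
      (pu s - rOf u v s₀ ^ 2 * (pv s - pu s) / rOf u v s ^ 2) s := fun s hs => by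
    have h := (hu' s hs).add
      ((hasDerivAt_const s (rOf u v s₀ ^ 2)).div (hr' s hs) (hr s hs).ne')
    refine h.congr_deriv ?_
    ring
  have hφanti : MonotoneOn (fun s => -(u s + rOf u v s₀ ^ 2 / rOf u v s)) (Ico s₀ S) := by
    refine aux_mono (f' := fun s => -(pu s - rOf u v s₀ ^ 2 * (pv s - pu s) / rOf u v s ^ 2))
      (fun s hs => (hφ s hs).neg) fun s hs => ?_
    rw [neg_nonneg, sub_nonpos, le_div_iff₀ (pow_pos (hr s hs) 2)]
    have hd : tOf u v s₀ * pu s₀ ≤ tOf u v s * (pv s - pu s) := by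
      have h1 := hDlow s hs
      nlinarith [mul_nonneg ht0.le (by linarith : (0:ℝ) ≤ pv s₀ - 2 * pu s₀)]
    have h6 : tOf u v s * (pu s * rOf u v s ^ 2)
        ≤ tOf u v s * (rOf u v s₀ ^ 2 * (pv s - pu s)) := by
      calc tOf u v s * (pu s * rOf u v s ^ 2) = tOf u v s * rOf u v s ^ 2 * pu s := by ring
        _ ≤ tOf u v s₀ * rOf u v s₀ ^ 2 * pu s₀ := hCle s hs
        _ = rOf u v s₀ ^ 2 * (tOf u v s₀ * pu s₀) := by ring
        _ ≤ rOf u v s₀ ^ 2 * (tOf u v s * (pv s - pu s)) :=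
            mul_le_mul_of_nonneg_left hd (by positivity)
        _ = tOf u v s * (rOf u v s₀ ^ 2 * (pv s - pu s)) := by ring
    exact le_of_mul_le_mul_left h6 (ht s hs)
  refine ⟨fun s hs => ⟨?_, ?_⟩, fun s hs => ⟨hpu s hs, ?_⟩,
    ⟨hDlow, hhalf, rStrict⟩, uMono, fun s hs => ⟨uMono hs0 hs hs.1, ?_⟩⟩
  · have := hAmono hs0 hs hs.1; simpa using this
  · have h1 := hEconst s hs
    have h2 : 0 ≤ tOf u v s * pu s := mul_nonneg (ht s hs).le (hpu s hs)
    nlinarith [mul_le_mul_of_nonneg_left hpu₀ ht0.le, mul_pos ht0 hpv₀]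
  · rw [le_div_iff₀ (by have := ht s hs; have := hr s hs; positivity :
      (0:ℝ) < tOf u v s * rOf u v s ^ 2)]
    nlinarith [hCle s hs,
      mul_nonneg (mul_nonneg ht0.le (sq_nonneg (rOf u v s₀)))
        (by linarith : (0:ℝ) ≤ 1 / 2 * pv s₀ - pu s₀),
      mul_nonneg (mul_nonneg ht0.le (sq_nonneg (rOf u v s₀))) hpv₀.le]
  · have h1 := hφanti hs0 hs hs.1
    simp only [neg_le_neg_iff] at h1
    have h2 : rOf u v s₀ ^ 2 / rOf u v s₀ = rOf u v s₀ := by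
      rw [sq, mul_div_assoc, div_self hr0.ne', mul_one]
    have h3 : 0 ≤ rOf u v s₀ ^ 2 / rOf u v s := by
      have := (hr s hs).le; positivity
    linarith
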